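/- Let M be a subspace of a real Banach space E such that M^# = {f ∈ E* : ‖f‖ = ‖f|_M‖} is a linear subspace of E*. Then M has property-SNP with respect to the generating family ℱ of the weak topology on E. -/
import Mathlib


open scoped ENNReal NNReal

noncomputable section

/-- `χ_ρ(g) = sup { |g v| : ρ v ≤ 1 } ∈ [0,∞]`. -/
def chi {V : Type*} [AddCommGroup V] [Module ℝ V] [TopologicalSpace V]
    (ρ : V → ℝ) (g : V →L[ℝ] ℝ) : ℝ≥0∞ :=
  ⨆ v ∈ {v : V | ρ v ≤ 1}, ENNReal.ofReal |g v|

/-- The seminorm `ρ_F(x) = max_{f ∈ F} |f x|` of the weak topology, for a finite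
set `F` of functionals. -/
def rhoF {E : Type*} [NormedAddCommGroup E] [NormedSpace ℝ E]
    (F : Finset (E →L[ℝ] ℝ)) (x : E) : ℝ :=
  ⨆ f ∈ F, |f x|

/-- `M` has property-SNP with respect to the generating family
`ℱ = {ρ_F : F ⊆ B_{E*} finite}` of the weak topology on `E`. -/
def SNPweak {E : Type*} [NormedAddCommGroup E] [NormedSpace ℝ E]
    (M : Submodule ℝ E) : Prop :=
  ∀ f : M →L[ℝ] ℝ, ∃ F₀ : Finset (E →L[ℝ] ℝ), (∀ φ ∈ F₀, ‖φ‖ ≤ 1) ∧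
    chi (fun y : M => rhoF F₀ (y : E)) f < ⊤ ∧ ∃ ft : E →L[ℝ] ℝ,
      ∀ F : Finset (E →L[ℝ] ℝ), (∀ φ ∈ F, ‖φ‖ ≤ 1) → (∀ x, rhoF F₀ x ≤ rhoF F x) →
        (ft.comp M.subtypeL = f ∧ chi (rhoF F) ft = chi (fun y : M => rhoF F (y : E)) f) ∧
        ∀ g : E →L[ℝ] ℝ, g.comp M.subtypeL = f →
          chi (rhoF F) g = chi (fun y : M => rhoF F (y : E)) f → g = ft

section Aux

variable {E : Type*} [NormedAddCommGroup E] [NormedSpace ℝ E]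

lemma rhoF_le {F : Finset (E →L[ℝ] ℝ)} {x : E} {c : ℝ} (hc : 0 ≤ c)
    (h : ∀ φ ∈ F, |φ x| ≤ c) : rhoF F x ≤ c :=
  Real.iSup_le (fun φ => Real.iSup_le (fun hφ => h φ hφ) hc) hc

lemma rhoF_nonneg (F : Finset (E →L[ℝ] ℝ)) (x : E) : 0 ≤ rhoF F x :=
  Real.iSup_nonneg fun _ => Real.iSup_nonneg fun _ => abs_nonneg _

lemma le_rhoF {F : Finset (E →L[ℝ] ℝ)} {x : E} {φ : E →L[ℝ] ℝ} (hφ : φ ∈ F) :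
    |φ x| ≤ rhoF F x := by
  have hbdd : ∀ f : E →L[ℝ] ℝ, (⨆ _ : f ∈ F, |f x|) ≤ ((F.sup fun ψ => ‖ψ x‖₊ : ℝ≥0) : ℝ) := by
    intro f
    refine Real.iSup_le (fun hf => ?_) (by positivity)
    have h1 : ‖f x‖₊ ≤ F.sup fun ψ => ‖ψ x‖₊ := Finset.le_sup (f := fun ψ => ‖ψ x‖₊) hf
    calc |f x| = ((‖f x‖₊ : ℝ≥0) : ℝ) := by rw [coe_nnnorm, Real.norm_eq_abs]
    _ ≤ _ := NNReal.coe_le_coe.mpr h1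
  have h2 : |φ x| ≤ ⨆ _ : φ ∈ F, |φ x| :=
    le_ciSup (f := fun _ : φ ∈ F => |φ x|) (Set.Finite.bddAbove (Set.finite_range _)) hφ
  exact h2.trans (le_ciSup ⟨_, Set.forall_mem_range.mpr hbdd⟩ φ)

lemma rhoF_singleton (φ : E →L[ℝ] ℝ) (x : E) : rhoF {φ} x = |φ x| := by
  refine le_antisymm (rhoF_le (abs_nonneg _) fun ψ hψ => ?_)
    (le_rhoF (Finset.mem_singleton_self φ))
  rw [Finset.mem_singleton] at hψ
  subst hψ; exact le_rfl

lemma rhoF_le_norm {F : Finset (E →L[ℝ] ℝ)} (hF : ∀ φ ∈ F, ‖φ‖ ≤ 1) (x : E) :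
    rhoF F x ≤ ‖x‖ :=
  rhoF_le (norm_nonneg x) fun φ hφ => by
    calc |φ x| = ‖φ x‖ := (Real.norm_eq_abs _).symm
    _ ≤ ‖φ‖ * ‖x‖ := φ.le_opNorm x
    _ ≤ 1 * ‖x‖ := by gcongr; exact hF φ hφ
    _ = ‖x‖ := one_mul _

lemma le_chi {V : Type*} [AddCommGroup V] [Module ℝ V] [TopologicalSpace V]
    {ρ : V → ℝ} {g : V →L[ℝ] ℝ} {v : V} (hv : ρ v ≤ 1) :
    ENNReal.ofReal |g v| ≤ chi ρ g :=
  le_iSup₂ (f := fun v (_ : v ∈ {v : V | ρ v ≤ 1}) => ENNReal.ofReal |g v|) v hv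

lemma chi_le {V : Type*} [AddCommGroup V] [Module ℝ V] [TopologicalSpace V]
    {ρ : V → ℝ} {g : V →L[ℝ] ℝ} {c : ℝ≥0∞} (h : ∀ v, ρ v ≤ 1 → ENNReal.ofReal |g v| ≤ c) :
    chi ρ g ≤ c :=
  iSup₂_le h

lemma abs_le_of_chi_le {V : Type*} [AddCommGroup V] [Module ℝ V] [TopologicalSpace V]
    {ρ : V → ℝ} {g : V →L[ℝ] ℝ} {c : ℝ} (hc : 0 ≤ c)
    (h : chi ρ g ≤ ENNReal.ofReal c) {v : V} (hv : ρ v ≤ 1) : |g v| ≤ c :=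
  (ENNReal.ofReal_le_ofReal_iff hc).mp ((le_chi hv).trans h)

lemma abs_le_mul_rhoF {F : Finset (E →L[ℝ] ℝ)} {g : E →L[ℝ] ℝ} {c : ℝ} (hc : 0 ≤ c)
    (h : ∀ x, rhoF F x ≤ 1 → |g x| ≤ c) (x : E) : |g x| ≤ c * rhoF F x := by
  have key : ∀ ε : ℝ, 0 < ε → |g x| ≤ c * (rhoF F x + ε) := by
    intro ε hε
    set r := rhoF F x with hr
    have hrε : 0 < r + ε := by have := rhoF_nonneg F x; linarith
    set t : ℝ := (r + ε)⁻¹ with ht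
    have htpos : 0 < t := inv_pos.mpr hrε
    have hrho : rhoF F (t • x) ≤ 1 := by
      refine rhoF_le zero_le_one fun φ hφ => ?_
      have : φ (t • x) = t * φ x := by rw [map_smul]; rfl
      rw [this, abs_mul, abs_of_pos htpos]
      calc t * |φ x| ≤ t * r := by
            exact mul_le_mul_of_nonneg_left (le_rhoF hφ) htpos.le
      _ ≤ t * (r + ε) := by nlinarith
      _ = 1 := inv_mul_cancel₀ hrε.ne'
    have hb := h _ hrho
    have hgt : g (t • x) = t * g x := by rw [map_smul]; rfl
    rw [hgt, abs_mul, abs_of_pos htpos] at hb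
    calc |g x| = (r + ε) * (t * |g x|) := (mul_inv_cancel_left₀ hrε.ne' _).symm
    _ ≤ (r + ε) * c := mul_le_mul_of_nonneg_left hb hrε.le
    _ = c * (r + ε) := mul_comm _ _
  rcases eq_or_lt_of_le hc with hc0 | hcpos
  · have := key 1 one_pos
    have h0 : c = 0 := hc0.symm
    rw [h0] at this ⊢
    simpa using this
  · refine le_of_forall_pos_le_add fun δ hδ => ?_
    have := key (δ / c) (div_pos hδ hcpos)
    calc |g x| ≤ c * (rhoF F x + δ / c) := this
    _ = c * rhoF F x + c * (δ / c) := by ring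
    _ = c * rhoF F x + δ := by rw [mul_div_cancel₀ _ hcpos.ne']

lemma norm_comp_subtypeL_le (M : Submodule ℝ E) (g : E →L[ℝ] ℝ) :
    ‖g.comp M.subtypeL‖ ≤ ‖g‖ := by
  refine ContinuousLinearMap.opNorm_le_bound _ (norm_nonneg g) fun y => ?_
  calc ‖(g.comp M.subtypeL) y‖ = ‖g (y : E)‖ := rfl
  _ ≤ ‖g‖ * ‖(y : E)‖ := g.le_opNorm _
  _ = ‖g‖ * ‖y‖ := by rw [Submodule.norm_coe]

end Aux

set_option maxHeartbeats 1000000 in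
set_option synthInstance.maxHeartbeats 200000 in
theorem statement14 {E : Type*} [NormedAddCommGroup E] [NormedSpace ℝ E] [CompleteSpace E]
    (M : Submodule ℝ E)
    (hlin : ∃ S : Submodule ℝ (E →L[ℝ] ℝ),
      (S : Set (E →L[ℝ] ℝ)) = {f : E →L[ℝ] ℝ | ‖f‖ = ‖f.comp M.subtypeL‖}) :
    SNPweak M := by
  obtain ⟨S, hS⟩ := hlin
  have hmemS : ∀ g : E →L[ℝ] ℝ, g ∈ S ↔ ‖g‖ = ‖g.comp M.subtypeL‖ := by
    intro g
    rw [← SetLike.mem_coe, hS]; exact Iff.rfl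
  intro f
  obtain ⟨ft, hft, hnorm⟩ := exists_extension_norm_eq M f
  have hcomp : ft.comp M.subtypeL = f := by
    ext y; exact hft y
  set φ₀ : E →L[ℝ] ℝ := ‖f‖⁻¹ • ft with hφ₀
  -- key pointwise identity
  have hkey : ∀ x : E, |ft x| = ‖f‖ * rhoF {φ₀} x := by
    intro x
    rw [rhoF_singleton]
    rcases eq_or_ne ‖f‖ 0 with h0 | h0
    · have : ft = 0 := by rwa [← norm_eq_zero, hnorm]
      simp [this, hφ₀]
    · have : φ₀ x = ‖f‖⁻¹ * ft x := rfl
      rw [this, abs_mul, abs_of_nonneg (inv_nonneg.mpr (norm_nonneg f))]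
      field_simp
  have hφ₀norm : ∀ φ ∈ ({φ₀} : Finset (E →L[ℝ] ℝ)), ‖φ‖ ≤ 1 := by
    intro φ hφ
    rw [Finset.mem_singleton] at hφ; subst hφ
    refine ContinuousLinearMap.opNorm_le_bound _ zero_le_one fun x => ?_
    have h1 : φ₀ x = ‖f‖⁻¹ * ft x := rfl
    rw [h1, Real.norm_eq_abs, abs_mul, abs_of_nonneg (inv_nonneg.mpr (norm_nonneg f)), one_mul]
    rcases eq_or_ne ‖f‖ 0 with h0 | h0
    · rw [h0]
      simp only [inv_zero, zero_mul]; exact norm_nonneg x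
    · have h2 : |ft x| ≤ ‖ft‖ * ‖x‖ := (Real.norm_eq_abs (ft x)) ▸ ft.le_opNorm x
      calc ‖f‖⁻¹ * |ft x| ≤ ‖f‖⁻¹ * (‖ft‖ * ‖x‖) :=
            mul_le_mul_of_nonneg_left h2 (inv_nonneg.mpr (norm_nonneg f))
      _ = ‖f‖⁻¹ * ‖f‖ * ‖x‖ := by rw [hnorm]; ring
      _ = ‖x‖ := by rw [inv_mul_cancel₀ h0, one_mul]
  -- finiteness of chi over M for F₀
  have hchiM_le : ∀ F : Finset (E →L[ℝ] ℝ), (∀ x : E, rhoF {φ₀} x ≤ rhoF F x) →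
      chi (fun y : M => rhoF F (y : E)) f ≤ ENNReal.ofReal ‖f‖ := by
    intro F hmono
    refine chi_le fun y hy => ENNReal.ofReal_le_ofReal ?_
    have h1 : |f y| = |ft (y : E)| := by rw [hft y]
    rw [h1, hkey]
    calc ‖f‖ * rhoF {φ₀} (y : E) ≤ ‖f‖ * rhoF F (y : E) :=
          mul_le_mul_of_nonneg_left (hmono _) (norm_nonneg f)
    _ ≤ ‖f‖ * 1 := mul_le_mul_of_nonneg_left hy (norm_nonneg f)
    _ = ‖f‖ := mul_one _
  refine ⟨{φ₀}, hφ₀norm, ?_, ft, ?_⟩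
  · exact lt_of_le_of_lt (hchiM_le {φ₀} fun x => le_rfl) ENNReal.ofReal_lt_top
  intro F hF hmono
  -- bound for ft w.r.t. rhoF F
  have hub : ∀ x : E, |ft x| ≤ ‖f‖ * rhoF F x := fun x => by
    rw [hkey x]
    exact mul_le_mul_of_nonneg_left (hmono x) (norm_nonneg f)
  -- chi over M equals ofReal ‖f‖
  have hMle := hchiM_le F hmono
  have hMge : ENNReal.ofReal ‖f‖ ≤ chi (fun y : M => rhoF F (y : E)) f := by
    by_contra h
    push_neg at h
    set c := (chi (fun y : M => rhoF F (y : E)) f).toReal with hc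
    have hlt : chi (fun y : M => rhoF F (y : E)) f < ⊤ := h.trans_le le_top
    have hc0 : 0 ≤ c := ENNReal.toReal_nonneg
    have hchic : chi (fun y : M => rhoF F (y : E)) f ≤ ENNReal.ofReal c := by
      rw [hc, ENNReal.ofReal_toReal hlt.ne]
    have hcf : c < ‖f‖ := by
      have := (ENNReal.toReal_lt_toReal hlt.ne ENNReal.ofReal_ne_top).mpr h
      rwa [ENNReal.toReal_ofReal (norm_nonneg f)] at this
    have : ‖f‖ ≤ c := by
      refine f.opNorm_le_bound hc0 fun y => ?_
      rcases eq_or_ne y 0 with rfl | hy0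
      · simp
      · have hny : 0 < ‖y‖ := norm_pos_iff.mpr hy0
        set z : M := ‖y‖⁻¹ • y with hz
        have hnz : ‖(z : E)‖ ≤ 1 := by
          rw [hz]
          push_cast
          rw [norm_smul, Real.norm_eq_abs, abs_of_pos (inv_pos.mpr hny), Submodule.norm_coe,
            inv_mul_cancel₀ hny.ne']
        have hrz : rhoF F (z : E) ≤ 1 := (rhoF_le_norm hF _).trans hnz
        have hfz : |f z| ≤ c := abs_le_of_chi_le hc0 hchic hrz
        have hfz2 : f z = ‖y‖⁻¹ * f y := by rw [hz, map_smul]; rfl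
        rw [hfz2, abs_mul, abs_of_pos (inv_pos.mpr hny)] at hfz
        have : ‖f y‖ = |f y| := Real.norm_eq_abs _
        rw [this]
        calc |f y| = ‖y‖ * (‖y‖⁻¹ * |f y|) := (mul_inv_cancel_left₀ hny.ne' _).symm
        _ ≤ ‖y‖ * c := mul_le_mul_of_nonneg_left hfz hny.le
        _ = c * ‖y‖ := mul_comm _ _
    linarith
  have hMeq : chi (fun y : M => rhoF F (y : E)) f = ENNReal.ofReal ‖f‖ :=
    le_antisymm hMle hMge
  -- chi over E for ft equals ofReal ‖f‖
  have hEle : chi (rhoF F) ft ≤ ENNReal.ofReal ‖f‖ := by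
    refine chi_le fun x hx => ENNReal.ofReal_le_ofReal ?_
    calc |ft x| ≤ ‖f‖ * rhoF F x := hub x
    _ ≤ ‖f‖ * 1 := mul_le_mul_of_nonneg_left hx (norm_nonneg f)
    _ = ‖f‖ := mul_one _
  have hEge : chi (fun y : M => rhoF F (y : E)) f ≤ chi (rhoF F) ft := by
    refine chi_le fun y hy => ?_
    have h1 : |f y| = |ft (y : E)| := by rw [hft y]
    rw [h1]
    exact le_chi hy
  have hEeq : chi (rhoF F) ft = ENNReal.ofReal ‖f‖ :=
    le_antisymm hEle (hMge.trans hEge)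
  -- main uniqueness argument
  have huniq : ∀ g : E →L[ℝ] ℝ, g.comp M.subtypeL = f →
      chi (rhoF F) g = chi (fun y : M => rhoF F (y : E)) f → g = ft := by
    intro g hg hchi
    rw [hMeq] at hchi
    have hball : ∀ x, rhoF F x ≤ 1 → |g x| ≤ ‖f‖ := fun x hx =>
      abs_le_of_chi_le (norm_nonneg f) hchi.le hx
    have hb : ∀ x, |g x| ≤ ‖f‖ * rhoF F x := abs_le_mul_rhoF (norm_nonneg f) hball
    have hgle : ‖g‖ ≤ ‖f‖ := by
      refine g.opNorm_le_bound (norm_nonneg f) fun x => ?_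
      rw [Real.norm_eq_abs]
      exact (hb x).trans (mul_le_mul_of_nonneg_left (rhoF_le_norm hF x) (norm_nonneg f))
    have hgge : ‖f‖ ≤ ‖g‖ := by
      rw [← hg]; exact norm_comp_subtypeL_le M g
    have hgnorm : ‖g‖ = ‖f‖ := le_antisymm hgle hgge
    have hgS : g ∈ S := by rw [hmemS, hg, hgnorm]
    have hftS : ft ∈ S := by rw [hmemS, hcomp, hnorm]
    have hsub : g - ft ∈ S := S.sub_mem hgS hftS
    have hsubnorm : ‖g - ft‖ = ‖(g - ft).comp M.subtypeL‖ := (hmemS _).mp hsub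
    have hsubcomp : (g - ft).comp M.subtypeL = 0 := by
      rw [ContinuousLinearMap.sub_comp, hg, hcomp, sub_self]
    have h0 : ‖g - ft‖ = 0 := by
      rw [hsubnorm, hsubcomp]; exact ContinuousLinearMap.opNorm_zero
    exact sub_eq_zero.mp ((ContinuousLinearMap.opNorm_zero_iff (g - ft)).mp h0)
  exact ⟨⟨hcomp, hEeq.trans hMeq.symm⟩, huniq⟩
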